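/- Define φ₁, φ₂ : ℝ² → ℝ by φ₁(x,y) = x⁵y²/(x⁶ + y⁶), φ₂(x,y) = x²y⁵/(x⁶ + y⁶) for (x,y) ≠ (0,0) and φ₁(0,0) = φ₂(0,0) = 0. Then φ₁ and φ₂ are continuous on ℝ² and satisfy x²y² = φ₁(x,y)·x³ + φ₂(x,y)·y³ for all (x,y) ∈ ℝ². -/

import Mathlib

lemma denom_pos (p : ℝ × ℝ) (hp : p ≠ 0) : 0 < p.1 ^ 6 + p.2 ^ 6 := by
  have h1 : 0 ≤ p.1 ^ 6 := by positivity
  have h2 : 0 ≤ p.2 ^ 6 := by positivity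
  by_cases h : p.1 = 0
  · have hy : p.2 ≠ 0 := fun hy => hp (Prod.ext_iff.2 ⟨h, hy⟩)
    have : 0 < p.2 ^ 6 := by positivity
    linarith
  · have : 0 < p.1 ^ 6 := by positivity
    linarith

lemma cont_aux (f : ℝ × ℝ → ℝ) (hf : Continuous f)
    (hb : ∀ p : ℝ × ℝ, |f p| ≤ ‖p‖ * (p.1 ^ 6 + p.2 ^ 6)) :
    Continuous (fun p : ℝ × ℝ => if p = 0 then 0 else f p / (p.1 ^ 6 + p.2 ^ 6)) := by
  rw [continuous_iff_continuousAt]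
  intro p
  by_cases hp : p = 0
  · subst hp
    have key : Filter.Tendsto (fun p : ℝ × ℝ =>
        if p = 0 then (0:ℝ) else f p / (p.1 ^ 6 + p.2 ^ 6)) (nhds 0) (nhds 0) := by
      refine squeeze_zero_norm (a := fun p : ℝ × ℝ => ‖p‖) ?_ ?_
      · intro q
        by_cases hq : q = 0
        · simp [hq]
        · have hd := denom_pos q hq
          simp only [if_neg hq, Real.norm_eq_abs, abs_div, abs_of_pos hd]
          rw [div_le_iff₀ hd]
          exact hb q
      · simpa using (continuous_norm (E := ℝ × ℝ)).tendsto 0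
    simpa [ContinuousAt] using key
  · have hc : ContinuousAt (fun p : ℝ × ℝ => f p / (p.1 ^ 6 + p.2 ^ 6)) p := by
      exact ContinuousAt.div hf.continuousAt (by fun_prop) (ne_of_gt (denom_pos p hp))
    refine hc.congr ?_
    filter_upwards [compl_singleton_mem_nhds hp] with q hq
    simp [if_neg (show q ≠ 0 from hq)]

open Classical in
theorem continuous_rational_solution_example :
    Continuous (fun p : ℝ × ℝ =>
      if p = 0 then 0 else p.1 ^ 5 * p.2 ^ 2 / (p.1 ^ 6 + p.2 ^ 6)) ∧
    Continuous (fun p : ℝ × ℝ =>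
      if p = 0 then 0 else p.1 ^ 2 * p.2 ^ 5 / (p.1 ^ 6 + p.2 ^ 6)) ∧
    ∀ p : ℝ × ℝ, p.1 ^ 2 * p.2 ^ 2 =
      (if p = 0 then 0 else p.1 ^ 5 * p.2 ^ 2 / (p.1 ^ 6 + p.2 ^ 6)) * p.1 ^ 3 +
      (if p = 0 then 0 else p.1 ^ 2 * p.2 ^ 5 / (p.1 ^ 6 + p.2 ^ 6)) * p.2 ^ 3 := by
  refine ⟨?_, ?_, ?_⟩
  · apply cont_aux _ (by fun_prop)
    intro p
    have h1 : |p.1| ≤ ‖p‖ := by simpa using norm_fst_le p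
    have h2 : p.1 ^ 4 * p.2 ^ 2 ≤ p.1 ^ 6 + p.2 ^ 6 := by
      nlinarith [sq_nonneg (p.1 ^ 2 - p.2 ^ 2), sq_nonneg p.1, sq_nonneg p.2,
        sq_nonneg (p.1 * p.2), sq_nonneg (p.1 ^ 2 * p.2 - p.2 ^ 3), sq_nonneg (p.1 ^ 3)]
    calc |p.1 ^ 5 * p.2 ^ 2| = |p.1| * (p.1 ^ 4 * p.2 ^ 2) := by
          rw [abs_mul, abs_pow, abs_pow, show (5:ℕ) = 4 + 1 from rfl, pow_succ,
            (by decide : Even 4).pow_abs, (by decide : Even 2).pow_abs]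
          ring
      _ ≤ ‖p‖ * (p.1 ^ 6 + p.2 ^ 6) :=
          mul_le_mul h1 h2 (by positivity) (norm_nonneg p)
  · apply cont_aux _ (by fun_prop)
    intro p
    have h1 : |p.2| ≤ ‖p‖ := by simpa using norm_snd_le p
    have h2 : p.1 ^ 2 * p.2 ^ 4 ≤ p.1 ^ 6 + p.2 ^ 6 := by
      nlinarith [sq_nonneg (p.1 ^ 2 - p.2 ^ 2), sq_nonneg (p.1 * p.2),
        sq_nonneg (p.1 * p.2 ^ 2 - p.1 ^ 3), sq_nonneg (p.2 ^ 3)]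
    calc |p.1 ^ 2 * p.2 ^ 5| = |p.2| * (p.1 ^ 2 * p.2 ^ 4) := by
          rw [abs_mul, abs_pow, abs_pow, show |p.2| ^ 5 = |p.2| ^ 4 * |p.2| from pow_succ |p.2| 4,
            (by decide : Even 4).pow_abs, (by decide : Even 2).pow_abs]
          ring
      _ ≤ ‖p‖ * (p.1 ^ 6 + p.2 ^ 6) :=
          mul_le_mul h1 h2 (by positivity) (norm_nonneg p)
  · intro p
    by_cases hp : p = 0
    · simp [hp]
    · have hd := denom_pos p hp
      rw [if_neg hp, if_neg hp]
      field_simp
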